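/- For all integers n, m ≥ 1, the complete bipartite graph K_{n,m} satisfies χ'_sCF(K_{n,m}) ≤ 2. -/

import Mathlib

open SimpleGraph

/-- An edge `e` is *satisfied* by the colouring `c` of (the edges of) the graph `H` if some
colour is assigned by `c` to exactly one edge of `H` incident to an endpoint of `e`. -/
def CFSatisfies {V : Type*} {k : ℕ} (H : SimpleGraph V) (c : Sym2 V → Fin k) (e : Sym2 V) :
    Prop :=
  ∃ col : Fin k, ∃! f : Sym2 V, f ∈ H.edgeSet ∧ (∃ x ∈ e, x ∈ f) ∧ c f = col

/-- The conflict-free chromatic index `χ'_CF(G)`: the least `k` such that `G` admits an edge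
colouring with `k` colours in which every edge of `G` is satisfied. -/
noncomputable def cfChromIndex {V : Type*} (G : SimpleGraph V) : ℕ :=
  sInf {k | ∃ c : Sym2 V → Fin k, ∀ e ∈ G.edgeSet, CFSatisfies G c e}

/-- The parameter `χ'_sCF(G)`: the least `k` for which some subgraph `H` of `G` admits an edge
colouring with `k` colours such that every edge of `G` is satisfied. -/
noncomputable def scfChromIndex {V : Type*} (G : SimpleGraph V) : ℕ :=
  sInf {k | ∃ H : SimpleGraph V, H ≤ G ∧
    ∃ c : Sym2 V → Fin k, ∀ e ∈ G.edgeSet, CFSatisfies H c e}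


def starH (n m : ℕ) (hn : 0 < n) : SimpleGraph (Fin n ⊕ Fin m) where
  Adj u v := (u = Sum.inl ⟨0, hn⟩ ∧ v.isRight) ∨ (v = Sum.inl ⟨0, hn⟩ ∧ u.isRight)
  symm := ⟨fun u v => by tauto⟩
  loopless := ⟨fun u => by rintro (⟨rfl, h⟩ | ⟨rfl, h⟩) <;> simp at h⟩

lemma starH_edge (n m : ℕ) (hn : 0 < n) (f : Sym2 (Fin n ⊕ Fin m))
    (hf : f ∈ (starH n m hn).edgeSet) :
    ∃ j : Fin m, f = s(Sum.inl ⟨0, hn⟩, Sum.inr j) := by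
  induction f using Sym2.ind with
  | _ u v =>
    rw [SimpleGraph.mem_edgeSet] at hf
    rcases hf with ⟨rfl, h⟩ | ⟨rfl, h⟩
    · obtain ⟨j, rfl⟩ := Sum.isRight_iff.mp h
      exact ⟨j, rfl⟩
    · obtain ⟨j, rfl⟩ := Sum.isRight_iff.mp h
      exact ⟨j, Sym2.eq_swap⟩


/-- For all `n, m ≥ 1`, `χ'_sCF(K_{n,m}) ≤ 2`. -/
theorem scfChromIndex_completeBipartite_le_two (n m : ℕ) (hn : 1 ≤ n) (hm : 1 ≤ m) :
    scfChromIndex (completeBipartiteGraph (Fin n) (Fin m)) ≤ 2 := by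
  apply Nat.sInf_le
  set a0 : Fin n ⊕ Fin m := Sum.inl ⟨0, hn⟩ with ha0
  set b0 : Fin n ⊕ Fin m := Sum.inr ⟨0, hm⟩ with hb0
  refine ⟨starH n m hn, ?_, fun f => (if f = s(a0, b0) then (0:Fin 2) else 1), ?_⟩
  · intro u v huv
    rcases huv with ⟨rfl, h⟩ | ⟨rfl, h⟩
    · exact Or.inl ⟨rfl, h⟩
    · exact Or.inr ⟨h, rfl⟩
  · -- every edge of G is satisfied
    have key : ∀ (a : Fin n) (b : Fin m),
        CFSatisfies (starH n m hn) (fun f => (if f = s(a0, b0) then (0:Fin 2) else 1))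
          s(Sum.inl a, Sum.inr b) := by
      intro a b
      by_cases hA : (Sum.inl a : Fin n ⊕ Fin m) = a0
      · -- a = 0 : use colour 0, unique edge s(a0, b0)
        refine ⟨0, s(a0, b0), ⟨?_, ⟨Sum.inl a, by simp, by simp [hA]⟩, if_pos rfl⟩, ?_⟩
        · rw [SimpleGraph.mem_edgeSet]
          exact Or.inl ⟨rfl, rfl⟩
        · rintro f' ⟨-, -, hc⟩
          by_contra hne
          simp only [if_neg hne] at hc
          exact one_ne_zero hc
      · -- a ≠ 0 : the unique incident star edge is s(a0, inr b)
        refine ⟨if s(a0, Sum.inr b) = s(a0, b0) then 0 else 1, s(a0, Sum.inr b),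
          ⟨?_, ⟨Sum.inr b, by simp, by simp⟩, rfl⟩, ?_⟩
        · rw [SimpleGraph.mem_edgeSet]
          exact Or.inl ⟨rfl, rfl⟩
        · rintro f' ⟨hmem, ⟨x, hxe, hxf⟩, -⟩
          obtain ⟨j, rfl⟩ := starH_edge n m hn f' hmem
          rw [Sym2.mem_iff] at hxe hxf
          rcases hxe with rfl | rfl
          · rcases hxf with h | h
            · exact absurd h hA
            · simp at h
          · rcases hxf with h | h
            · simp [ha0] at h
            · rw [Sum.inr.injEq] at h
              subst h
              rfl
    intro e he
    induction e using Sym2.ind with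
    | _ u v =>
      rw [SimpleGraph.mem_edgeSet] at he
      rcases he with ⟨hu, hv⟩ | ⟨hu, hv⟩
      · obtain ⟨a, rfl⟩ := Sum.isLeft_iff.mp hu
        obtain ⟨b, rfl⟩ := Sum.isRight_iff.mp hv
        exact key a b
      · obtain ⟨b, rfl⟩ := Sum.isRight_iff.mp hu
        obtain ⟨a, rfl⟩ := Sum.isLeft_iff.mp hv
        rw [show s(Sum.inr b, Sum.inl a) = s(Sum.inl a, Sum.inr b) from Sym2.eq_swap]
        exact key a b
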